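/- Let G=(V,E) be a directed unweighted graph with total ranking r. In the hop-stepping labeling algorithm—initialized with label entries for all edges, and where iteration i+1 concatenates an entry covering an i-hop trough path with an entry covering a single edge—for every 1 ≤ i ≤ D_H, after the i-th iteration the label entries covering all trough shortest paths of hop length exactly i have been generated. -/

import Mathlib

def IsPath {V : Type*} (E : V → V → Prop) (p : List V) (u v : V) : Prop :=
  List.Chain' E p ∧ p.head? = some u ∧ p.getLast? = some v

def IsShortestPath {V : Type*} (E : V → V → Prop) (p : List V) (u v : V) : Prop :=
  IsPath E p u v ∧ ∀ q : List V, IsPath E q u v → p.length ≤ q.length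

def Trough {V : Type*} (r : V → ℕ) (p : List V) (u v : V) : Prop :=
  ∀ x ∈ (p.drop 1).dropLast, r x < max (r u) (r v)

noncomputable def GDist {V : Type*} (E : V → V → Prop) (u v : V) : ℕ∞ :=
  sInf { n : ℕ∞ | ∃ p : List V, IsPath E p u v ∧ n = ((p.length - 1 : ℕ) : ℕ∞) }

/-- A list of vertices is a trough path: every internal vertex is ranked strictly
below the maximum rank of the two endpoints. -/
def TroughL {V : Type*} (r : V → ℕ) (p : List V) : Prop :=
  ∀ u v : V, p.head? = some u → p.getLast? = some v →
    ∀ x ∈ (p.drop 1).dropLast, r x < max (r u) (r v)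

/-- `HSCov E r i p` : at iteration `i` of hop-stepping, a label entry covering the
path `p` has been generated. Iteration 1 covers the edges; iteration `i+1` extends an
`i`-hop covered path by a single edge at either end, provided the result is a trough path. -/
inductive HSCov {V : Type*} (E : V → V → Prop) (r : V → ℕ) : ℕ → List V → Prop
  | base {u v : V} : E u v → HSCov E r 1 [u, v]
  | prepend {i : ℕ} {u w : V} {p : List V} : HSCov E r i (w :: p) → E u w →
      TroughL r (u :: w :: p) → HSCov E r (i + 1) (u :: w :: p)
  | append {i : ℕ} {p : List V} {v w : V} : HSCov E r i p → p.getLast? = some v →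
      E v w → TroughL r (p ++ [w]) → HSCov E r (i + 1) (p ++ [w])

/-- Completeness of hop-stepping: after the i-th iteration, the label entries covering
all trough shortest paths of hop length exactly i have been generated. -/
theorem stmt7 {V : Type*} (E : V → V → Prop) (r : V → ℕ) (hr : Function.Injective r) :
    ∀ i : ℕ, 1 ≤ i → ∀ (p : List V) (u v : V),
      IsShortestPath E p u v → Trough r p u v → p.length - 1 = i →
      HSCov E r i p := by
  intro i
  induction i with
  | zero => intro h; omega
  | succ k ih =>
    intro _ p u v hsp ht hlen
    obtain ⟨⟨hch, hhd, hlast⟩, hmin⟩ := hsp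
    -- p = u :: rest
    obtain ⟨rest, rfl⟩ : ∃ rest, p = u :: rest := by
      cases p with
      | nil => simp at hhd
      | cons a l => simp at hhd; exact ⟨l, by rw [hhd]⟩
    have hplen : rest.length = k + 1 := by simp at hlen; omega
    rcases Nat.eq_zero_or_pos k with hk | hk
    · -- base case : length 2
      subst hk
      obtain ⟨b, rfl⟩ : ∃ b, rest = [b] := by
        cases rest with
        | nil => simp at hplen
        | cons b l => cases l with
          | nil => exact ⟨b, rfl⟩
          | cons c m => simp at hplen
      have hb : b = v := by simpa using hlast
      subst hb
      exact HSCov.base (List.isChain_pair.mp hch)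
    · -- step case
    -- rest = w :: t
      obtain ⟨w, t, rfl⟩ : ∃ w t, rest = w :: t := by
        cases rest with
        | nil => simp at hplen
        | cons w t => exact ⟨w, t, rfl⟩
      have htlen : t.length = k := by simpa using hplen
      -- u ≠ v
      have huv : u ≠ v := by
        rintro rfl
        have h1 : IsPath E [u] u u :=
          ⟨List.isChain_singleton u, rfl, rfl⟩
        have := hmin [u] h1
        simp at this
      have hruv : r u ≠ r v := fun h => huv (hr h)
      have hTL : TroughL r (u :: w :: t) := by
        intro u' v' h1 h2 x hx
        have h1' : u' = u := by simpa using h1.symm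
        have h2' : v' = v := by rw [hlast] at h2; injection h2 with h; exact h.symm
        subst h1'; subst h2'
        exact ht x hx
      rcases lt_or_gt_of_ne hruv with hlt | hgt
      · -- r u < r v : peel the front
        have hE : E u w := (List.isChain_cons_cons.mp hch).1
        have hch' : List.Chain' E (w :: t) := (List.isChain_cons_cons.mp hch).2
        have hlast' : (w :: t).getLast? = some v := by
          simpa [List.getLast?_cons_cons] using hlast
        have hsp' : IsShortestPath E (w :: t) w v := by
          refine ⟨⟨hch', rfl, hlast'⟩, ?_⟩
          intro q hq
          obtain ⟨hqc, hqh, hql⟩ := hq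
          obtain ⟨q', rfl⟩ : ∃ q', q = w :: q' := by
            cases q with
            | nil => simp at hqh
            | cons a l => simp at hqh; exact ⟨l, by rw [hqh]⟩
          have hpath : IsPath E (u :: w :: q') u v := by
            refine ⟨List.isChain_cons_cons.mpr ⟨hE, hqc⟩, rfl, ?_⟩
            simpa [List.getLast?_cons_cons] using hql
          have := hmin _ hpath
          simpa using this
        have ht' : Trough r (w :: t) w v := by
          intro x hx
          -- x ∈ t.dropLast
          simp only [List.drop_one, List.tail_cons] at hx
          have hxp : x ∈ ((u :: w :: t).drop 1).dropLast := by
            simp only [List.drop_one, List.tail_cons]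
            cases t with
            | nil => simp at hx
            | cons t0 t' =>
              show x ∈ w :: (t0 :: t').dropLast
              exact List.mem_cons_of_mem _ hx
          have := ht x hxp
          have : r x < r v := by omega
          omega
        have hcov : HSCov E r k (w :: t) :=
          ih hk (w :: t) w v hsp' ht' (by simp [htlen])
        exact HSCov.prepend hcov hE hTL
      · -- r v < r u : peel the back
        set p : List V := u :: w :: t with hp
        have hpne : p ≠ [] := by simp [hp]
        have hpq : p.dropLast ++ [v] = p := by
          have h1 := List.dropLast_append_getLast hpne
          have h2 : p.getLast hpne = v := by
            have := List.getLast?_eq_getLast hpne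
            rw [hlast] at this
            exact (Option.some.injEq _ _ ▸ this.symm)
          rw [h2] at h1; exact h1
        set q : List V := p.dropLast with hq
        have hqlen : q.length = k + 1 := by
          have : p.length = k + 2 := by simp [hp, htlen]
          simp [hq, this]
        have hqne : q ≠ [] := by
          intro h; rw [h] at hqlen; simp at hqlen
        set v' : V := q.getLast hqne with hv'
        have hqlast : q.getLast? = some v' := List.getLast?_eq_getLast hqne
        -- chain decomposition
        have hchq : List.Chain' E q ∧ E v' v := by
          have := hch
          rw [← hpq] at this
          replace this := List.isChain_append.mp this
          refine ⟨this.1, ?_⟩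
          have := this.2.2 v' hqlast v rfl
          exact this
        have hqhd : q.head? = some u := by
          simp [hq, hp]
        -- internal vertices of q are internal in p
        have hqsub : ∀ x ∈ (q.drop 1).dropLast, x ∈ (p.drop 1).dropLast := by
          intro x hx
          have hx1 : x ∈ q.drop 1 := List.dropLast_subset _ hx
          -- (p.drop 1).dropLast = q.drop 1
          have hkey : (p.drop 1).dropLast = q.drop 1 := by
            obtain ⟨t0, t', rfl⟩ : ∃ t0 t', t = t0 :: t' := by
              cases t with
              | nil => simp at htlen; omega
              | cons t0 t' => exact ⟨t0, t', rfl⟩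
            rfl
          rw [hkey]; exact hx1
        have hsp' : IsShortestPath E q u v' := by
          refine ⟨⟨hchq.1, hqhd, hqlast⟩, ?_⟩
          intro q2 hq2
          obtain ⟨hq2c, hq2h, hq2l⟩ := hq2
          have hq2ne : q2 ≠ [] := by intro h; rw [h] at hq2h; simp at hq2h
          have hpath : IsPath E (q2 ++ [v]) u v := by
            refine ⟨?_, ?_, List.getLast?_concat⟩
            · refine List.isChain_append.mpr ?_
              refine ⟨hq2c, List.isChain_singleton v, ?_⟩
              intro x hx y hy
              rw [hq2l] at hx
              simp at hx hy
              rw [← hx, ← hy]; exact hchq.2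
            · rw [List.head?_append_of_ne_nil _ hq2ne]
              exact hq2h
          have := hmin _ hpath
          rw [← hpq] at this
          simp at this
          omega
        have ht' : Trough r q u v' := by
          intro x hx
          have := ht x (hqsub x hx)
          have : r x < r u := by omega
          omega
        have hcov : HSCov E r k q := ih hk q u v' hsp' ht' (by omega)
        have := HSCov.append hcov hqlast hchq.2 (by rw [hpq]; exact hTL)
        rw [hpq] at this
        exact this
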